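/- arXiv:1212.3531 — 5 statements merged into one kernel-verified Lean document; each statement's English description precedes it below -/
import Mathlib

section
/- If X is a real random variable with density bounded by K and s > 0, then for all ε > 0, P(|X - s/X| < ε) ≤ 2Kε. -/
open MeasureTheory ProbabilityTheory

/-- If X has density bounded by K and s > 0, then P(|X - s/X| < ε) ≤ 2Kε for all ε > 0. -/
theorem prob_abs_sub_div_lt_le {Ω : Type*} [MeasureSpace Ω]
    [IsProbabilityMeasure (ℙ : Measure Ω)]
    (X : Ω → ℝ) (K : ℝ) (hX : HasPDF X ℙ)
    (hK : ∀ x, pdf X ℙ volume x ≤ ENNReal.ofReal K)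
    (s : ℝ) (hs : 0 < s) :
    ∀ ε > 0, ℙ {ω | |X ω - s / X ω| < ε} ≤ ENNReal.ofReal (2 * K * ε) := by
  haveI := hX
  intro ε hε
  by_cases hK0 : 0 ≤ K
  case neg =>
    -- K < 0 : then pdf ≤ 0, contradicting ∫ pdf = 1
    exfalso
    have h0 : ∀ x, pdf X ℙ volume x = 0 := by
      intro x
      have := hK x
      rwa [ENNReal.ofReal_eq_zero.2 (le_of_lt (not_le.1 hK0)), le_zero_iff] at this
    have h1 : (∫⁻ x, pdf X ℙ volume x) = ℙ Set.univ := pdf.lintegral_eq_measure_univ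
    simp [h0, measure_univ] at h1
  -- main case
  set r := Real.sqrt (ε ^ 2 + 4 * s) with hrdef
  have hr : r ^ 2 = ε ^ 2 + 4 * s := Real.sq_sqrt (by positivity)
  have hr0 : 0 ≤ r := Real.sqrt_nonneg _
  set a := (-ε + r) / 2 with ha
  set b := (ε + r) / 2 with hb
  set S : Set ℝ := {x | |x - s / x| < ε} with hSdef
  set T : Set ℝ := ({0} ∪ Set.Ioo a b) ∪ Set.Ioo (-b) (-a) with hTdef
  have hsub : S ⊆ T := by
    intro x hx
    simp only [hSdef, Set.mem_setOf_eq, abs_lt] at hx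
    obtain ⟨h1, h2⟩ := hx
    rcases lt_trichotomy x 0 with hx0 | hx0 | hx0
    · -- negative branch
      right
      have hsx : s / x * x = s := div_mul_cancel₀ s (ne_of_lt hx0)
      have p1 : (x - s / x) * x > ε * x := by
        exact (mul_lt_mul_right_of_neg hx0).2 h2
      have p2 : (x - s / x) * x < -ε * x := by
        have := (mul_lt_mul_right_of_neg hx0).2 h1
        linarith
      have q1 : x ^ 2 - s > ε * x := by nlinarith [hsx]
      have q2 : x ^ 2 - s < -ε * x := by nlinarith [hsx]
      constructor
      · -- -b < x, i.e. -(ε+r)/2 < x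
        rw [hb]
        nlinarith [q2, hr, hr0, hε, hx0]
      · -- x < -a
        rw [ha]
        nlinarith [q1, hr, hr0, hε, hx0]
    · left; left; simp [hx0]
    · -- positive branch
      left; right
      have hsx : s / x * x = s := div_mul_cancel₀ s (ne_of_gt hx0)
      have p1 : (x - s / x) * x > -ε * x := (mul_lt_mul_iff_of_pos_right hx0).2 h1
      have p2 : (x - s / x) * x < ε * x := (mul_lt_mul_iff_of_pos_right hx0).2 h2
      have q1 : x ^ 2 - s > -ε * x := by nlinarith [hsx]
      have q2 : x ^ 2 - s < ε * x := by nlinarith [hsx]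
      constructor
      · rw [ha]; nlinarith [q1, hr, hr0, hε, hx0]
      · rw [hb]; nlinarith [q2, hr, hr0, hε, hx0]
  have hSmeas : MeasurableSet S := by
    have hm : Measurable fun x : ℝ => |x - s / x| :=
      (measurable_id.sub (measurable_const.div measurable_id)).abs
    exact measurableSet_lt hm measurable_const
  have hTmeas : MeasurableSet T :=
    ((measurableSet_singleton 0).union measurableSet_Ioo).union measurableSet_Ioo
  have hpre : {ω | |X ω - s / X ω| < ε} = X ⁻¹' S := rfl
  have hmap : ℙ (X ⁻¹' S) = ∫⁻ x in S, pdf X ℙ volume x := by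
    rw [← Measure.map_apply_of_aemeasurable (HasPDF.aemeasurable X ℙ volume) hSmeas,
      map_eq_setLIntegral_pdf X ℙ volume hSmeas]
  have hvolT : volume T ≤ ENNReal.ofReal (2 * ε) := by
    calc volume T ≤ volume ({(0:ℝ)} ∪ Set.Ioo a b) + volume (Set.Ioo (-b) (-a)) :=
          measure_union_le _ _
      _ ≤ (volume {(0:ℝ)} + volume (Set.Ioo a b)) + volume (Set.Ioo (-b) (-a)) := by
          gcongr; exact measure_union_le _ _
      _ = ENNReal.ofReal (b - a) + ENNReal.ofReal (-a - -b) := by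
          simp [Real.volume_Ioo, Real.volume_singleton]
      _ ≤ ENNReal.ofReal (2 * ε) := by
          have h1 : b - a = ε := by rw [ha, hb]; ring
          have h2 : -a - -b = ε := by rw [ha, hb]; ring
          rw [h1, h2, ← ENNReal.ofReal_add hε.le hε.le]
          exact le_of_eq (by ring_nf)
  calc ℙ {ω | |X ω - s / X ω| < ε} = ∫⁻ x in S, pdf X ℙ volume x := by rw [hpre, hmap]
    _ ≤ ∫⁻ x in T, pdf X ℙ volume x := lintegral_mono_set hsub
    _ ≤ ∫⁻ _ in T, ENNReal.ofReal K := lintegral_mono fun x => hK x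
    _ = ENNReal.ofReal K * volume T := by rw [setLIntegral_const]
    _ ≤ ENNReal.ofReal K * ENNReal.ofReal (2 * ε) := by gcongr
    _ = ENNReal.ofReal (2 * K * ε) := by
        rw [← ENNReal.ofReal_mul hK0]; ring_nf
end

section
/- If X is a real random variable with density bounded by K, p a real constant, and q ≥ 0, then for all t > 0, P(|(X+p)/((X+p)² + q)| > t) ≤ 2K/t. -/
open MeasureTheory ProbabilityTheory

lemma abs_lt_of_ratio_gt {y q t : ℝ} (hq : 0 ≤ q) (ht : 0 < t)
    (h : t < |y / (y ^ 2 + q)|) : |y| < 1 / t := by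
  rcases eq_or_ne y 0 with rfl | hy
  · simp at h; linarith
  · have hy2 : 0 < y ^ 2 := by positivity
    have hden : 0 < y ^ 2 + q := by linarith
    have h1 : |y / (y ^ 2 + q)| = |y| / (y ^ 2 + q) := by
      rw [abs_div, abs_of_pos hden]
    have h2 : |y| / (y ^ 2 + q) ≤ |y| / y ^ 2 := by
      apply div_le_div_of_nonneg_left (abs_nonneg y) hy2 (by linarith)
    have h3 : |y| / y ^ 2 = 1 / |y| := by
      rw [sq_abs y |>.symm, sq]
      field_simp
    have habs : 0 < |y| := abs_pos.mpr hy
    have h4 : t < 1 / |y| := by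
      rw [h1] at h
      calc t < |y| / (y ^ 2 + q) := h
        _ ≤ |y| / y ^ 2 := h2
        _ = 1 / |y| := h3
    rw [lt_div_iff₀ ht]
    have h5 := (lt_div_iff₀ habs).mp h4
    nlinarith

/-- If X has density bounded by K, p ∈ ℝ, q ≥ 0, then
P(|(X+p)/((X+p)² + q)| > t) ≤ 2K/t for all t > 0. -/
theorem prob_ratio_gt_le_of_nonneg {Ω : Type*} [MeasureSpace Ω]
    [IsProbabilityMeasure (ℙ : Measure Ω)]
    (X : Ω → ℝ) (K : ℝ) (hX : HasPDF X ℙ)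
    (hK : ∀ x, pdf X ℙ volume x ≤ ENNReal.ofReal K)
    (p q : ℝ) (hq : 0 ≤ q) :
    ∀ t > 0, ℙ {ω | |(X ω + p) / ((X ω + p) ^ 2 + q)| > t} ≤ ENNReal.ofReal (2 * K / t) := by
  intro t ht
  set a : ℝ := -p - 1 / t
  set b : ℝ := -p + 1 / t
  have hsub : {ω | |(X ω + p) / ((X ω + p) ^ 2 + q)| > t} ⊆ {ω | X ω ∈ Set.Ioo a b} := by
    intro ω hω
    have := abs_lt_of_ratio_gt hq ht hω
    have h := abs_lt.mp this
    constructor <;> simp only [a, b] <;> linarith [h.1, h.2]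
  have hmeas : MeasurableSet (Set.Ioo a b) := measurableSet_Ioo
  have hXm : AEMeasurable X ℙ := hX.aemeasurable
  have key : ℙ {ω | X ω ∈ Set.Ioo a b} = Measure.map X ℙ (Set.Ioo a b) := by
    rw [Measure.map_apply_of_aemeasurable hXm hmeas]; rfl
  have hmap : Measure.map X ℙ = volume.withDensity (pdf X ℙ volume) :=
    map_eq_withDensity_pdf X ℙ volume
  calc ℙ {ω | |(X ω + p) / ((X ω + p) ^ 2 + q)| > t}
      ≤ ℙ {ω | X ω ∈ Set.Ioo a b} := measure_mono hsub
    _ = Measure.map X ℙ (Set.Ioo a b) := key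
    _ = ∫⁻ x in Set.Ioo a b, pdf X ℙ volume x := by
        rw [hmap, withDensity_apply _ hmeas]
    _ ≤ ∫⁻ _ in Set.Ioo a b, ENNReal.ofReal K := by
        exact setLIntegral_mono measurable_const (fun x _ => hK x)
    _ = ENNReal.ofReal K * volume (Set.Ioo a b) := by
        rw [setLIntegral_const]
    _ ≤ ENNReal.ofReal (2 * K / t) := by
        rw [Real.volume_Ioo]
        have hba : b - a = 2 / t := by simp only [a, b]; ring
        rw [hba]
        rcases le_or_gt 0 K with hK0 | hK0
        · rw [← ENNReal.ofReal_mul hK0]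
          apply ENNReal.ofReal_le_ofReal
          rw [mul_div_assoc]; ring_nf; rfl
        · simp [ENNReal.ofReal_of_nonpos hK0.le,
            ENNReal.ofReal_of_nonpos (by
              have : 2 * K / t ≤ 0 := by
                apply div_nonpos_of_nonpos_of_nonneg <;> nlinarith
              exact this)]
end

section
/- If X is a real random variable with density bounded by K, p ∈ ℝ, and q ∈ ℝ arbitrary, then for all t > 0, P(|(X+p)/((X+p)² + q)| > t) ≤ 2K/t. -/
open MeasureTheory ProbabilityTheory

lemma abs_lt_of_quad_lt {c s d z : ℝ} (hc : 0 < c) (hs : 0 < s)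
    (hd : d = Real.sqrt (c ^ 2 + 4 * s)) (hz1 : z ^ 2 - c * z - s < 0) :
    z < (c + d) / 2 := by
  have hd0 : 0 ≤ d := hd ▸ Real.sqrt_nonneg _
  have hd2 : d ^ 2 = c ^ 2 + 4 * s := by
    rw [hd]; exact Real.sq_sqrt (by positivity)
  nlinarith [sq_nonneg (z - (c + d) / 2), sq_nonneg (z - (c - d) / 2)]

lemma abs_gt_of_quad_gt {c s d z : ℝ} (hc : 0 < c) (hs : 0 < s)
    (hd : d = Real.sqrt (c ^ 2 + 4 * s)) (hz0 : 0 < z)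
    (hz1 : 0 < z ^ 2 + c * z - s) :
    (-c + d) / 2 < z := by
  have hd0 : 0 ≤ d := hd ▸ Real.sqrt_nonneg _
  have hd2 : d ^ 2 = c ^ 2 + 4 * s := by
    rw [hd]; exact Real.sq_sqrt (by positivity)
  nlinarith [sq_nonneg (z - (-c + d) / 2)]

lemma vol_bound (p q t : ℝ) (ht : 0 < t) :
    volume {y : ℝ | |(y + p) / ((y + p) ^ 2 + q)| > t} ≤ ENNReal.ofReal (2 / t) := by
  rcases le_or_gt 0 q with hq | hq
  · -- q ≥ 0 : set ⊆ Ioo (-(1/t)-p) (1/t-p)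
    have hsub : {y : ℝ | |(y + p) / ((y + p) ^ 2 + q)| > t} ⊆
        Set.Ioo (-(1 / t) - p) (1 / t - p) := by
      intro y hy
      simp only [Set.mem_setOf_eq] at hy
      set z := y + p with hz
      by_cases hd : z ^ 2 + q = 0
      · rw [hd, div_zero, abs_zero] at hy; linarith
      have hd' : 0 < z ^ 2 + q := lt_of_le_of_ne (by positivity) (Ne.symm hd)
      rw [abs_div, abs_of_pos hd'] at hy
      have h2 : t * (z ^ 2 + q) < |z| := (lt_div_iff₀ hd').mp hy
      have hz0 : z ≠ 0 := by
        rintro h; rw [h] at h2; simp at h2; nlinarith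
      have habs : 0 < |z| := abs_pos.mpr hz0
      have hzz : |z| * |z| = z ^ 2 := by rw [← abs_mul, abs_mul_self]; ring
      have h3 : t * |z| < 1 := by
        have : t * (|z| * |z|) ≤ t * (z ^ 2 + q) := by nlinarith
        nlinarith
      have h4 : |z| < 1 / t := by rw [lt_div_iff₀ ht]; linarith
      have := abs_lt.mp h4
      constructor <;> [skip; skip] <;> simp only [hz] at this ⊢ <;> linarith [this.1, this.2]
    calc volume {y : ℝ | |(y + p) / ((y + p) ^ 2 + q)| > t}
        ≤ volume (Set.Ioo (-(1 / t) - p) (1 / t - p)) := measure_mono hsub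
      _ = ENNReal.ofReal (2 / t) := by
          rw [Real.volume_Ioo]; congr 1; field_simp; ring
  · -- q < 0
    set s : ℝ := -q with hsdef
    have hs : 0 < s := by simp [hsdef]; linarith
    set c : ℝ := 1 / t with hcdef
    have hc : 0 < c := by positivity
    set d : ℝ := Real.sqrt (c ^ 2 + 4 * s) with hddef
    set a : ℝ := (-c + d) / 2 with hadef
    set b : ℝ := (c + d) / 2 with hbdef
    have hsub : {y : ℝ | |(y + p) / ((y + p) ^ 2 + q)| > t} ⊆
        Set.Ioo (a - p) (b - p) ∪ Set.Ioo (-b - p) (-a - p) := by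
      intro y hy
      simp only [Set.mem_setOf_eq] at hy
      set z := y + p with hz
      by_cases hd0 : z ^ 2 + q = 0
      · rw [hd0, div_zero, abs_zero] at hy; linarith
      rw [abs_div] at hy
      have hden : 0 < |z ^ 2 + q| := abs_pos.mpr hd0
      have h2 : t * |z ^ 2 + q| < |z| := (lt_div_iff₀ hden).mp hy
      have hz0 : z ≠ 0 := by
        rintro h; rw [h] at h2; simp at h2; nlinarith [abs_nonneg q]
      have habs : 0 < |z| := abs_pos.mpr hz0
      have hzz : |z| * |z| = z ^ 2 := by rw [← abs_mul, abs_mul_self]; ring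
      -- |z^2 - s| < c * |z|
      have h3 : |z ^ 2 + q| < c * |z| := by
        rw [hcdef]
        rw [div_mul_eq_mul_div, lt_div_iff₀ ht]
        nlinarith
      have h4 := abs_lt.mp h3
      -- z^2 - c|z| - s < 0  and  z^2 + c|z| - s > 0
      have hq1 : |z| ^ 2 - c * |z| - s < 0 := by
        have := h4.2
        nlinarith [hzz]
      have hq2 : 0 < |z| ^ 2 + c * |z| - s := by
        have := h4.1
        nlinarith [hzz]
      have hub : |z| < b := abs_lt_of_quad_lt hc hs hddef hq1
      have hlb : a < |z| := abs_gt_of_quad_gt hc hs hddef habs hq2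
      rcases abs_cases z with ⟨he, _⟩ | ⟨he, _⟩
      · left
        rw [he] at hub hlb
        exact ⟨by simp only [hz] at hlb ⊢; linarith, by simp only [hz] at hub ⊢; linarith⟩
      · right
        rw [he] at hub hlb
        exact ⟨by simp only [hz] at hub ⊢; linarith, by simp only [hz] at hlb ⊢; linarith⟩
    calc volume {y : ℝ | |(y + p) / ((y + p) ^ 2 + q)| > t}
        ≤ volume (Set.Ioo (a - p) (b - p) ∪ Set.Ioo (-b - p) (-a - p)) := measure_mono hsub
      _ ≤ volume (Set.Ioo (a - p) (b - p)) + volume (Set.Ioo (-b - p) (-a - p)) :=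
          measure_union_le _ _
      _ = ENNReal.ofReal (1 / t) + ENNReal.ofReal (1 / t) := by
          have hba : ∀ x : ℝ, (b - p) - (a - p) = 1 / t := by
            intro x; rw [hbdef, hadef, hcdef]; ring
          rw [Real.volume_Ioo, Real.volume_Ioo]
          congr 1 <;> congr 1 <;> [exact hba 0; skip]
          rw [hbdef, hadef, hcdef]; ring
      _ = ENNReal.ofReal (2 / t) := by
          rw [← ENNReal.ofReal_add (by positivity) (by positivity)]
          congr 1; ring

/-- If X has density bounded by K, p ∈ ℝ, q ∈ ℝ arbitrary, then
P(|(X+p)/((X+p)² + q)| > t) ≤ 2K/t for all t > 0. -/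
theorem prob_ratio_gt_le {Ω : Type*} [MeasureSpace Ω]
    [IsProbabilityMeasure (ℙ : Measure Ω)]
    (X : Ω → ℝ) (K : ℝ) (hX : HasPDF X ℙ)
    (hK : ∀ x, pdf X ℙ volume x ≤ ENNReal.ofReal K)
    (p q : ℝ) :
    ∀ t > 0, ℙ {ω | |(X ω + p) / ((X ω + p) ^ 2 + q)| > t} ≤ ENNReal.ofReal (2 * K / t) := by
  intro t ht
  haveI := hX
  set A : Set ℝ := {y : ℝ | |(y + p) / ((y + p) ^ 2 + q)| > t} with hAdef
  have hA : MeasurableSet A := by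
    have hf : Measurable fun y : ℝ => |(y + p) / ((y + p) ^ 2 + q)| := by
      apply Measurable.abs
      exact ((measurable_id.add_const p).div
        (((measurable_id.add_const p).pow_const 2).add_const q))
    exact measurableSet_lt measurable_const hf
  have hset : {ω | |(X ω + p) / ((X ω + p) ^ 2 + q)| > t} = X ⁻¹' A := rfl
  rw [hset, ← Measure.map_apply_of_aemeasurable (HasPDF.aemeasurable X ℙ volume) hA,
    map_eq_withDensity_pdf X ℙ volume, withDensity_apply _ hA]
  calc ∫⁻ y in A, pdf X ℙ volume y
      ≤ ∫⁻ _ in A, ENNReal.ofReal K := lintegral_mono fun y => hK y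
    _ = ENNReal.ofReal K * volume A := by rw [setLIntegral_const]
    _ ≤ ENNReal.ofReal K * ENNReal.ofReal (2 / t) := by
        exact mul_le_mul_right (vol_bound p q t ht) _
    _ = ENNReal.ofReal (2 * K / t) := by
        rw [← ENNReal.ofReal_mul' (by positivity)]
        congr 1; field_simp
end

section
/- For any finite sequence of real random variables X₁,…,X_m, the weak L¹ quasi-norm of (∑ᵢ Xᵢ²)^{1/2} is at most 4 ∑ᵢ ‖Xᵢ‖_{1,∞}, where ‖X‖_{1,∞} := sup_{t>0} t · P(|X| > t). -/
open MeasureTheory ProbabilityTheory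

set_option maxHeartbeats 1000000

/-- The weak L¹ (Lorentz L^{1,∞}) quasi-norm of a real random variable:
‖X‖_{1,∞} = sup_{t>0} t · P(|X| > t). -/
noncomputable def weakL1Norm {Ω : Type*} [MeasureSpace Ω] (X : Ω → ℝ) : ENNReal :=
  ⨆ (t : ℝ) (_ : 0 < t), ENNReal.ofReal t * ℙ {ω | |X ω| > t}

section Aux

open Set ENNReal

variable {Ω : Type*} [MeasureSpace Ω]

/-- Nested measurable hulls of the superlevel sets of `|X|` at rational levels. -/
def envSet (X : Ω → ℝ) (q : ℚ) : Set Ω :=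
  ⋂ (p : ℚ) (_ : p ≤ q), toMeasurable ℙ {ω | (p : ℝ) < |X ω|}

lemma measurableSet_envSet (X : Ω → ℝ) (q : ℚ) : MeasurableSet (envSet X q) :=
  MeasurableSet.iInter fun _ => MeasurableSet.iInter fun _ => measurableSet_toMeasurable _ _

lemma envSet_antitone (X : Ω → ℝ) : Antitone (envSet X) := fun q q' h =>
  Set.iInter₂_mono' fun p hp => ⟨p, hp.trans h, subset_rfl⟩

lemma mem_envSet (X : Ω → ℝ) {q : ℚ} {ω : Ω} (h : (q : ℝ) < |X ω|) : ω ∈ envSet X q := by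
  refine Set.mem_iInter₂.2 fun p hp => subset_toMeasurable _ _ ?_
  exact lt_of_le_of_lt (by exact_mod_cast hp) h

/-- A measurable envelope of `|X|`, with the same (outer) tail measures. -/
noncomputable def env (X : Ω → ℝ) : Ω → ℝ≥0∞ :=
  fun ω => ⨆ q : ℚ, (envSet X q).indicator (fun _ => ENNReal.ofReal q) ω

lemma measurable_env (X : Ω → ℝ) : Measurable (env X) :=
  Measurable.iSup fun q => measurable_const.indicator (measurableSet_envSet X q)

lemma le_env (X : Ω → ℝ) (ω : Ω) : ENNReal.ofReal |X ω| ≤ env X ω := by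
  refine le_of_forall_lt fun c hc => ?_
  have hctop : c ≠ ∞ := hc.ne_top
  have hc' : c.toReal < |X ω| := (ENNReal.lt_ofReal_iff_toReal_lt hctop).1 hc
  obtain ⟨q, hq1, hq2⟩ := exists_rat_btwn hc'
  have hcq : c < ENNReal.ofReal q := (ENNReal.lt_ofReal_iff_toReal_lt hctop).2 hq1
  refine hcq.trans_le ?_
  have hmem : ω ∈ envSet X q := mem_envSet X hq2
  rw [env]
  refine le_iSup_of_le q ?_
  rw [Set.indicator_of_mem hmem]

lemma meas_env_gt_le (X : Ω → ℝ) {s : ℝ} (hs : 0 < s) :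
    ℙ {ω | ENNReal.ofReal s < env X ω} ≤ ℙ {ω | s < |X ω|} := by
  have hsub : {ω | ENNReal.ofReal s < env X ω} ⊆
      ⋃ q : {q : ℚ // s < (q : ℝ)}, envSet X q.1 := by
    intro ω hω
    rw [Set.mem_setOf_eq, env, lt_iSup_iff] at hω
    obtain ⟨q, hq⟩ := hω
    by_cases hmem : ω ∈ envSet X q
    · rw [Set.indicator_of_mem hmem] at hq
      have hsq : s < (q : ℝ) := (ENNReal.ofReal_lt_ofReal_iff_of_nonneg hs.le).1 hq
      exact Set.mem_iUnion.2 ⟨⟨q, hsq⟩, hmem⟩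
    · rw [Set.indicator_of_notMem hmem] at hq
      exact absurd hq (by simp)
  refine (measure_mono hsub).trans ?_
  have hdir : Directed (· ⊆ ·) (fun q : {q : ℚ // s < (q : ℝ)} => envSet X q.1) := by
    intro a b
    refine ⟨⟨min a.1 b.1, lt_min (by exact_mod_cast a.2) (by exact_mod_cast b.2) |>.trans_le (by push_cast; exact le_refl _)⟩, ?_, ?_⟩
    · exact envSet_antitone X (min_le_left _ _)
    · exact envSet_antitone X (min_le_right _ _)
  rw [hdir.measure_iUnion]
  refine iSup_le fun q => ?_
  calc ℙ (envSet X q.1)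
      ≤ ℙ (toMeasurable ℙ {ω | (q.1 : ℝ) < |X ω|}) :=
        measure_mono fun ω hω => Set.mem_iInter₂.1 hω q.1 le_rfl
    _ = ℙ {ω | (q.1 : ℝ) < |X ω|} := measure_toMeasurable _
    _ ≤ ℙ {ω | s < |X ω|} := measure_mono fun ω hω => lt_trans q.2 hω

/-- Second moment bound for the truncation of a function with weak-L¹ tails. -/
lemma lintegral_min_sq_le {g : Ω → ℝ≥0∞} (hg : Measurable g)
    {t : ℝ} (ht : 0 < t) {N : ℝ≥0∞}
    (hN : ∀ s : ℝ, 0 < s → ENNReal.ofReal s * ℙ {ω | ENNReal.ofReal s < g ω} ≤ N) :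
    ∫⁻ ω, (min (g ω) (ENNReal.ofReal t)) ^ 2 ≤ 2 * ENNReal.ofReal t * N := by
  set f : Ω → ℝ := fun ω => (min (g ω) (ENNReal.ofReal t)).toReal with hf
  have hmin_ne_top : ∀ ω, min (g ω) (ENNReal.ofReal t) ≠ ∞ :=
    fun ω => ne_top_of_le_ne_top ENNReal.ofReal_ne_top (min_le_right _ _)
  have hf_mble : Measurable f := (hg.min measurable_const).ennreal_toReal
  have hf_nn : ∀ ω, 0 ≤ f ω := fun ω => ENNReal.toReal_nonneg
  have hf_le : ∀ ω, f ω ≤ t := by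
    intro ω
    calc f ω ≤ (ENNReal.ofReal t).toReal :=
          ENNReal.toReal_mono ENNReal.ofReal_ne_top (min_le_right _ _)
      _ = t := ENNReal.toReal_ofReal ht.le
  have hfg : ∀ ω, (min (g ω) (ENNReal.ofReal t)) ^ 2 = ENNReal.ofReal (f ω ^ 2) := by
    intro ω
    rw [ENNReal.ofReal_pow (hf_nn ω), hf, ENNReal.ofReal_toReal (hmin_ne_top ω)]
  have g_intble : ∀ s > (0:ℝ), IntervalIntegrable (fun u : ℝ => 2 * u) volume 0 s :=
    fun s _ => (continuous_const.mul continuous_id).intervalIntegrable 0 s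
  have layer := lintegral_comp_eq_lintegral_meas_lt_mul (ℙ : Measure Ω)
      (Filter.Eventually.of_forall hf_nn) hf_mble.aemeasurable g_intble
      ((ae_restrict_iff' measurableSet_Ioi).2 (Filter.Eventually.of_forall
        fun s (hs : s ∈ Set.Ioi (0:ℝ)) => by have := hs.out; positivity))
  have hG : ∀ ω, (∫ u in (0:ℝ)..f ω, 2 * u) = f ω ^ 2 := by
    intro ω
    rw [intervalIntegral.integral_const_mul, integral_id]
    ring
  simp_rw [hfg, ← hG]
  rw [layer]
  have hsplit : Set.Ioi (0:ℝ) = Set.Ioc 0 t ∪ Set.Ioi t := (Set.Ioc_union_Ioi_eq_Ioi ht.le).symm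
  rw [hsplit, lintegral_union measurableSet_Ioi (Set.Ioc_disjoint_Ioi le_rfl)]
  have h2 : ∫⁻ s in Set.Ioi t, ℙ {a | s < f a} * ENNReal.ofReal (2 * s) = 0 := by
    refine le_antisymm ?_ zero_le'
    have hzero : ∀ s ∈ Set.Ioi t, ℙ {a | s < f a} * ENNReal.ofReal (2 * s) ≤ 0 := by
      intro s hs
      have hempty : {a | s < f a} = ∅ := by
        ext a
        simp only [Set.mem_setOf_eq, Set.mem_empty_iff_false, iff_false, not_lt]
        exact (hf_le a).trans (le_of_lt hs)
      simp [hempty]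
    calc ∫⁻ s in Set.Ioi t, ℙ {a | s < f a} * ENNReal.ofReal (2 * s)
        ≤ ∫⁻ _ in Set.Ioi t, (0 : ℝ≥0∞) := setLIntegral_mono measurable_const hzero
      _ = 0 := by simp
  rw [h2, add_zero]
  calc ∫⁻ s in Set.Ioc 0 t, ℙ {a | s < f a} * ENNReal.ofReal (2 * s)
      ≤ ∫⁻ _ in Set.Ioc 0 t, 2 * N := by
        refine setLIntegral_mono measurable_const fun s hs => ?_
        obtain ⟨hs0, _⟩ := hs
        have hsub : {a | s < f a} ⊆ {ω | ENNReal.ofReal s < g ω} := by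
          intro a ha
          have h1 : ENNReal.ofReal s < min (g a) (ENNReal.ofReal t) := by
            rw [← ENNReal.ofReal_toReal (hmin_ne_top a)]
            exact (ENNReal.ofReal_lt_ofReal_iff_of_nonneg hs0.le).2 ha
          exact lt_of_lt_of_le h1 (min_le_left _ _)
        calc ℙ {a | s < f a} * ENNReal.ofReal (2 * s)
            = 2 * (ENNReal.ofReal s * ℙ {a | s < f a}) := by
              have h2s : ENNReal.ofReal (2 * s) = 2 * ENNReal.ofReal s := by
                rw [ENNReal.ofReal_mul (by norm_num : (0:ℝ) ≤ 2)]
                norm_num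
              rw [h2s]
              ring
          _ ≤ 2 * N := by
              refine mul_le_mul_right ?_ 2
              exact le_trans (mul_le_mul_right (measure_mono hsub) _) (hN s hs0)
    _ = 2 * N * ENNReal.ofReal t := by
        rw [setLIntegral_const, Real.volume_Ioc, sub_zero]
    _ = 2 * ENNReal.ofReal t * N := by ring

end Aux

/-- For any finite sequence of real random variables, the weak L¹ quasi-norm of
(∑ᵢ Xᵢ²)^{1/2} is at most 4 ∑ᵢ ‖Xᵢ‖_{1,∞}. -/
theorem weakL1Norm_sqrt_sum_sq_le {Ω : Type*} [MeasureSpace Ω]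
    [IsProbabilityMeasure (ℙ : Measure Ω)]
    {m : ℕ} (X : Fin m → Ω → ℝ) :
    weakL1Norm (fun ω => Real.sqrt (∑ i, (X i ω) ^ 2)) ≤ 4 * ∑ i, weakL1Norm (X i) := by
  rw [weakL1Norm]
  refine iSup₂_le fun t ht => ?_
  set B := ∑ i, weakL1Norm (X i) with hB
  set T := ENNReal.ofReal t with hT
  have hT0 : T ≠ 0 := by simp [hT, ENNReal.ofReal_eq_zero, not_le, ht]
  have hTtop : T ≠ ⊤ := ENNReal.ofReal_ne_top
  set g : Fin m → Ω → ENNReal := fun i => env (X i) with hg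
  -- tail bound for g i in terms of the weak norm of X i
  have hg_tail : ∀ i, ∀ s : ℝ, 0 < s →
      ENNReal.ofReal s * ℙ {ω | ENNReal.ofReal s < g i ω} ≤ weakL1Norm (X i) := by
    intro i s hs
    calc ENNReal.ofReal s * ℙ {ω | ENNReal.ofReal s < g i ω}
        ≤ ENNReal.ofReal s * ℙ {ω | s < |X i ω|} :=
          mul_le_mul_right (meas_env_gt_le (X i) hs) _
      _ ≤ weakL1Norm (X i) :=
          le_iSup₂ (f := fun u (_ : 0 < u) => ENNReal.ofReal u * ℙ {ω | |X i ω| > u}) s hs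
  -- step 1: the main set is contained in the envelope superlevel set
  have hstep1 : {ω | |Real.sqrt (∑ i, (X i ω) ^ 2)| > t} ⊆ {ω | T ^ 2 < ∑ i, (g i ω) ^ 2} := by
    intro ω hω
    rw [Set.mem_setOf_eq, abs_of_nonneg (Real.sqrt_nonneg _)] at hω
    have h1 : t ^ 2 < ∑ i, (X i ω) ^ 2 := (Real.lt_sqrt ht.le).1 hω
    have h2 : T ^ 2 = ENNReal.ofReal (t ^ 2) := (ENNReal.ofReal_pow ht.le 2).symm
    rw [Set.mem_setOf_eq, h2]
    calc ENNReal.ofReal (t ^ 2) < ENNReal.ofReal (∑ i, (X i ω) ^ 2) :=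
          (ENNReal.ofReal_lt_ofReal_iff_of_nonneg (by positivity)).2 h1
      _ = ∑ i, ENNReal.ofReal ((X i ω) ^ 2) :=
          ENNReal.ofReal_sum_of_nonneg fun i _ => sq_nonneg _
      _ ≤ ∑ i, (g i ω) ^ 2 := by
          refine Finset.sum_le_sum fun i _ => ?_
          rw [← sq_abs (X i ω), ENNReal.ofReal_pow (abs_nonneg _)]
          exact pow_le_pow_left' (le_env (X i) ω) 2
  -- step 2: split into large individual envelopes and a truncated part
  have hstep2 : {ω | T ^ 2 < ∑ i, (g i ω) ^ 2} ⊆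
      (⋃ i, {ω | T < g i ω}) ∪ {ω | T ^ 2 < ∑ i, (min (g i ω) T) ^ 2} := by
    intro ω hω
    by_cases hcase : ∃ i, T < g i ω
    · obtain ⟨i, hi⟩ := hcase
      exact Or.inl (Set.mem_iUnion.2 ⟨i, hi⟩)
    · push_neg at hcase
      refine Or.inr ?_
      have hmin : ∀ i, min (g i ω) T = g i ω := fun i => min_eq_left (hcase i)
      have hsum : ∑ i, (min (g i ω) T) ^ 2 = ∑ i, (g i ω) ^ 2 :=
        Finset.sum_congr rfl fun i _ => by rw [hmin i]
      show T ^ 2 < ∑ i, (min (g i ω) T) ^ 2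
      rw [hsum]
      exact hω
  -- Chebyshev for the truncated part
  have hcheb : T * ℙ {ω | T ^ 2 < ∑ i, (min (g i ω) T) ^ 2} ≤ 2 * B := by
    have hf_mble : Measurable fun ω => ∑ i, (min (g i ω) T) ^ 2 :=
      Finset.measurable_sum _ fun i _ => ((measurable_env (X i)).min measurable_const).pow_const 2
    have h1 : T ^ 2 * ℙ {ω | T ^ 2 < ∑ i, (min (g i ω) T) ^ 2} ≤
        ∫⁻ ω, ∑ i, (min (g i ω) T) ^ 2 := by
      refine le_trans ?_ (mul_meas_ge_le_lintegral₀ hf_mble.aemeasurable (T ^ 2))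
      have hss : {ω | T ^ 2 < ∑ i, (min (g i ω) T) ^ 2} ⊆
          {ω | T ^ 2 ≤ ∑ i, (min (g i ω) T) ^ 2} := Set.setOf_subset_setOf.2 fun ω hω => le_of_lt hω
      exact mul_le_mul_right (measure_mono hss) _
    have h2 : (∫⁻ ω, ∑ i, (min (g i ω) T) ^ 2) ≤ 2 * T * B := by
      rw [lintegral_finset_sum _ fun i _ => ((measurable_env (X i)).min measurable_const).pow_const 2]
      calc ∑ i, ∫⁻ ω, (min (g i ω) T) ^ 2
          ≤ ∑ i, 2 * T * weakL1Norm (X i) := by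
            refine Finset.sum_le_sum fun i _ => ?_
            exact lintegral_min_sq_le (measurable_env (X i)) ht (hg_tail i)
        _ = 2 * T * B := by rw [hB, Finset.mul_sum]
    have h3 : T * (T * ℙ {ω | T ^ 2 < ∑ i, (min (g i ω) T) ^ 2}) ≤ T * (2 * B) := by
      calc T * (T * ℙ {ω | T ^ 2 < ∑ i, (min (g i ω) T) ^ 2})
          = T ^ 2 * ℙ {ω | T ^ 2 < ∑ i, (min (g i ω) T) ^ 2} := by ring
        _ ≤ 2 * T * B := h1.trans h2
        _ = T * (2 * B) := by ring
    exact (ENNReal.mul_le_mul_iff_right hT0 hTtop).1 h3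
  -- put everything together
  calc T * ℙ {ω | |Real.sqrt (∑ i, (X i ω) ^ 2)| > t}
      ≤ T * ((∑ i, ℙ {ω | T < g i ω}) + ℙ {ω | T ^ 2 < ∑ i, (min (g i ω) T) ^ 2}) := by
        refine mul_le_mul_right ?_ _
        refine (measure_mono (hstep1.trans hstep2)).trans ?_
        refine (measure_union_le _ _).trans ?_
        gcongr
        exact (measure_iUnion_fintype_le _ _).trans le_rfl
    _ = (∑ i, T * ℙ {ω | T < g i ω}) + T * ℙ {ω | T ^ 2 < ∑ i, (min (g i ω) T) ^ 2} := by
        rw [mul_add, Finset.mul_sum]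
    _ ≤ B + 2 * B := by
        refine add_le_add ?_ hcheb
        rw [hB]
        exact Finset.sum_le_sum fun i _ => hg_tail i t ht
    _ ≤ 4 * B := by
        calc B + 2 * B = 3 * B := by ring
          _ ≤ 4 * B := mul_le_mul_left (by norm_num) B
end

section
/- Let A be an n×n random symmetric matrix whose entries A_{i,j}, i ≤ j, are independent with continuous distributions having densities bounded by K. Then for every pair (i,j), the weak L¹ quasi-norm of the (i,j) entry of A⁻¹ satisfies ‖(A⁻¹)_{i,j}‖_{1,∞} ≤ 2K, i.e., for all t > 0, P(|(A⁻¹)_{i,j}| > t) ≤ 2K/t. -/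
open MeasureTheory ProbabilityTheory

namespace InvEntryAux

open Set Matrix


/-- Linear case: the set where `t * |b*x + c| < |b|` has measure at most `2/t`. -/
lemma lin_vol (b c t : ℝ) (ht : 0 < t) :
    volume {x : ℝ | t * |b * x + c| < |b|} ≤ ENNReal.ofReal (2 / t) := by
  rcases eq_or_ne b 0 with hb | hb
  · have he : {x : ℝ | t * |b * x + c| < |b|} = ∅ := by
      ext x
      simp only [hb, mem_setOf_eq, mem_empty_iff_false, iff_false, not_lt, abs_zero]
      positivity
    simp [he]
  · have hsub : {x : ℝ | t * |b * x + c| < |b|} ⊆ Ioo (-(c/b) - 1/t) (-(c/b) + 1/t) := by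
      intro x hx
      simp only [mem_setOf_eq] at hx
      have hb' : 0 < |b| := abs_pos.mpr hb
      have h1 : |x + c / b| < 1 / t := by
        have : |x + c / b| = |b * x + c| / |b| := by
          rw [← abs_div]
          congr 1
          field_simp
        rw [this, div_lt_div_iff₀ hb' ht]
        calc |b * x + c| * t = t * |b * x + c| := by ring
          _ < |b| := hx
          _ = |b| * 1 := by ring
          _ = 1 * |b| := by ring
      rw [abs_lt] at h1
      exact ⟨by linarith [h1.1], by linarith [h1.2]⟩
    calc volume {x : ℝ | t * |b * x + c| < |b|} ≤ volume (Ioo (-(c/b) - 1/t) (-(c/b) + 1/t)) :=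
          measure_mono hsub
      _ = ENNReal.ofReal (2 / t) := by
          rw [Real.volume_Ioo]
          congr 1
          ring



/-- Boole-type estimate: one-sided containment for two real poles. -/
lemma key_plus (r₁ r₂ s sΔ : ℝ) (hs : 0 < s) (hr : r₁ ≤ r₂) (hsΔ0 : 0 ≤ sΔ)
    (hsΔ : sΔ ^ 2 = s ^ 2 * (r₂ - r₁) ^ 2 + 4) (x : ℝ)
    (hx : s * |(x - r₁) * (x - r₂)| < (x - r₁) + (x - r₂)) :
    (s * (r₁ + r₂) - 2 + sΔ) / (2 * s) < x ∧ x < (s * (r₁ + r₂) + 2 + sΔ) / (2 * s) := by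
  have hsΔ2 : 2 ≤ sΔ := by nlinarith [sq_nonneg (s * (r₂ - r₁))]
  have habs : 0 ≤ s * |(x - r₁) * (x - r₂)| := by positivity
  have hxr1 : r₁ < x := by
    by_contra hle
    push_neg at hle
    have : (x - r₁) + (x - r₂) ≤ 0 := by linarith
    linarith
  rcases le_or_gt x r₂ with hxr2 | hxr2
  · -- r₁ < x ≤ r₂ : |uv| = -(uv)
    have huv : (x - r₁) * (x - r₂) ≤ 0 :=
      mul_nonpos_of_nonneg_of_nonpos (by linarith) (by linarith)
    rw [abs_of_nonpos huv] at hx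
    have hT : 0 < s * ((x - r₁) * (x - r₂)) + ((x - r₁) + (x - r₂)) := by linarith
    have hsum : 0 < (x - r₁) + (x - r₂) := by nlinarith
    constructor
    · -- x > w₂
      have hL : 0 < 2 * s * x - s * (r₁ + r₂) + 2 := by nlinarith
      have hsq : sΔ ^ 2 < (2 * s * x - s * (r₁ + r₂) + 2) ^ 2 := by nlinarith
      have : sΔ < 2 * s * x - s * (r₁ + r₂) + 2 := by nlinarith
      rw [div_lt_iff₀ (by linarith : (0:ℝ) < 2 * s)]
      linarith
    · -- x < z₂ since x ≤ r₂ < z₂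
      have hr2z : s * (r₂ - r₁) - 2 < sΔ := by nlinarith
      have hsx : s * x ≤ s * r₂ := by nlinarith
      rw [lt_div_iff₀ (by linarith : (0:ℝ) < 2 * s)]
      linarith
  · -- x > r₂ : uv > 0
    have huv : 0 < (x - r₁) * (x - r₂) := mul_pos (by linarith) (by linarith)
    rw [abs_of_pos huv] at hx
    constructor
    · -- w₂ ≤ r₂ < x
      have hd0 : 0 ≤ s * (r₂ - r₁) := mul_nonneg hs.le (by linarith)
      have hpos : 0 < sΔ + (s * (r₂ - r₁) + 2) := by linarith
      have hw2 : sΔ ≤ s * (r₂ - r₁) + 2 := by nlinarith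
      rw [div_lt_iff₀ (by linarith : (0:ℝ) < 2 * s)]
      nlinarith
    · -- x < z₂ from R(x) < 0
      rcases le_or_gt (s * ((x - r₁) + (x - r₂)) - 2) 0 with hM | hM
      · rw [lt_div_iff₀ (by linarith : (0:ℝ) < 2 * s)]
        nlinarith
      · have hsq : (s * ((x - r₁) + (x - r₂)) - 2) ^ 2 < sΔ ^ 2 := by nlinarith
        have : s * ((x - r₁) + (x - r₂)) - 2 < sΔ := by nlinarith
        rw [lt_div_iff₀ (by linarith : (0:ℝ) < 2 * s)]
        linarith




/-- Quadratic case, positive leading coefficient. -/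
lemma quad_vol_pos (a b c t : ℝ) (ha : 0 < a) (ht : 0 < t) :
    volume {x : ℝ | 2 * t * |a * x ^ 2 + b * x + c| < |2 * a * x + b|} ≤ ENNReal.ofReal (2 / t) := by
  rcases lt_or_ge (b ^ 2 - 4 * a * c) 0 with hdisc | hdisc
  · -- no real roots
    set m : ℝ := -b / (2 * a) with hm
    have hsub : {x : ℝ | 2 * t * |a * x ^ 2 + b * x + c| < |2 * a * x + b|}
        ⊆ Ioo (m - 1/t) (m + 1/t) := by
      intro x hx
      simp only [mem_setOf_eq] at hx
      have hD : (a * x + b / 2) ^ 2 ≤ a * (a * x ^ 2 + b * x + c) := by nlinarith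
      have hDpos : 0 ≤ a * x ^ 2 + b * x + c := by nlinarith
      rw [abs_of_nonneg hDpos] at hx
      have habs2 : |2 * a * x + b| = 2 * |a * x + b / 2| := by
        rw [show 2 * a * x + b = 2 * (a * x + b / 2) by ring, abs_mul]
        simp [abs_of_nonneg]
      rw [habs2] at hx
      -- t * (a*x + b/2)^2 < a * |a*x + b/2|
      have hkey : t * (a * x + b / 2) ^ 2 < a * |a * x + b / 2| := by
        calc t * (a * x + b / 2) ^ 2 ≤ t * (a * (a * x ^ 2 + b * x + c)) := by nlinarith
          _ = a * (t * (a * x ^ 2 + b * x + c)) := by ring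
          _ < a * |a * x + b / 2| := by
              apply mul_lt_mul_of_pos_left _ ha
              linarith
      have hu : |a * x + b / 2| < a / t := by
        rcases eq_or_lt_of_le (abs_nonneg (a * x + b / 2)) with h0 | h0
        · rw [← h0]; positivity
        · have h2 : (a * x + b / 2) ^ 2 = |a * x + b / 2| ^ 2 := (sq_abs _).symm
          rw [lt_div_iff₀ ht]
          nlinarith
      have hxm : |x - m| < 1 / t := by
        have hxe : x - m = (a * x + b / 2) / a := by
          rw [hm]
          field_simp
          ring
        rw [hxe, abs_div, abs_of_pos ha, div_lt_iff₀ ha]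
        calc |a * x + b / 2| < a / t := hu
          _ = 1 / t * a := by ring
      rw [abs_lt] at hxm
      exact ⟨by linarith [hxm.1], by linarith [hxm.2]⟩
    calc volume _ ≤ volume (Ioo (m - 1/t) (m + 1/t)) := measure_mono hsub
      _ = ENNReal.ofReal (2 / t) := by rw [Real.volume_Ioo]; congr 1; ring
  · -- real roots
    set sd : ℝ := Real.sqrt (b ^ 2 - 4 * a * c) with hsd_def
    have hsd0 : 0 ≤ sd := Real.sqrt_nonneg _
    have hsd2 : sd ^ 2 = b ^ 2 - 4 * a * c := Real.sq_sqrt hdisc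
    set r₁ : ℝ := (-b - sd) / (2 * a) with hr1
    set r₂ : ℝ := (-b + sd) / (2 * a) with hr2
    have hr : r₁ ≤ r₂ := by
      rw [hr1, hr2]
      gcongr
      linarith
    have hfact : ∀ x : ℝ, a * x ^ 2 + b * x + c = a * ((x - r₁) * (x - r₂)) := by
      intro x
      rw [hr1, hr2]
      field_simp
      ring_nf
      nlinarith [hsd2]
    have hlin : ∀ x : ℝ, 2 * a * x + b = a * ((x - r₁) + (x - r₂)) := by
      intro x
      rw [hr1, hr2]
      field_simp
      ring
    set s : ℝ := 2 * t with hs_def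
    have hs : 0 < s := by positivity
    set sΔ : ℝ := Real.sqrt (s ^ 2 * (r₂ - r₁) ^ 2 + 4) with hsΔ_def
    have hsΔ0 : 0 ≤ sΔ := Real.sqrt_nonneg _
    have hsΔ2 : sΔ ^ 2 = s ^ 2 * (r₂ - r₁) ^ 2 + 4 := Real.sq_sqrt (by positivity)
    set w₂ : ℝ := (s * (r₁ + r₂) - 2 + sΔ) / (2 * s) with hw2
    set z₂ : ℝ := (s * (r₁ + r₂) + 2 + sΔ) / (2 * s) with hz2
    have hsub : {x : ℝ | 2 * t * |a * x ^ 2 + b * x + c| < |2 * a * x + b|}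
        ⊆ Ioo w₂ z₂ ∪ Ioo (r₁ + r₂ - z₂) (r₁ + r₂ - w₂) := by
      intro x hx
      simp only [mem_setOf_eq] at hx
      have h1 : |a * ((x - r₁) * (x - r₂))| = a * |(x - r₁) * (x - r₂)| := by
        rw [abs_mul, abs_of_pos ha]
      have h2 : |a * (x - r₁ + (x - r₂))| = a * |x - r₁ + (x - r₂)| := by
        rw [abs_mul, abs_of_pos ha]
      rw [hfact x, hlin x, h1, h2] at hx
      have hx' : s * |(x - r₁) * (x - r₂)| < |x - r₁ + (x - r₂)| := by
        calc s * |(x - r₁) * (x - r₂)|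
            = 1 / a * (2 * t * (a * |(x - r₁) * (x - r₂)|)) := by
              rw [hs_def]; field_simp
          _ < 1 / a * (a * |x - r₁ + (x - r₂)|) :=
              mul_lt_mul_of_pos_left hx (by positivity)
          _ = |x - r₁ + (x - r₂)| := by field_simp
      rcases lt_abs.mp hx' with hpos | hneg
      · left
        have := key_plus r₁ r₂ s sΔ hs hr hsΔ0 hsΔ2 x (by linarith)
        exact ⟨this.1, this.2⟩
      · right
        have hrefl : s * |((r₁ + r₂ - x) - r₁) * ((r₁ + r₂ - x) - r₂)|
            < ((r₁ + r₂ - x) - r₁) + ((r₁ + r₂ - x) - r₂) := by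
          have : ((r₁ + r₂ - x) - r₁) * ((r₁ + r₂ - x) - r₂) = (x - r₁) * (x - r₂) := by ring
          rw [this]
          linarith [hneg]
        have := key_plus r₁ r₂ s sΔ hs hr hsΔ0 hsΔ2 (r₁ + r₂ - x) hrefl
        exact ⟨by linarith [this.2], by linarith [this.1]⟩
    calc volume _ ≤ volume (Ioo w₂ z₂ ∪ Ioo (r₁ + r₂ - z₂) (r₁ + r₂ - w₂)) := measure_mono hsub
      _ ≤ volume (Ioo w₂ z₂) + volume (Ioo (r₁ + r₂ - z₂) (r₁ + r₂ - w₂)) := measure_union_le _ _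
      _ = ENNReal.ofReal (z₂ - w₂) + ENNReal.ofReal (z₂ - w₂) := by
          rw [Real.volume_Ioo, Real.volume_Ioo]
          congr 2
          ring
      _ = ENNReal.ofReal (2 / t) := by
          have hzw : z₂ - w₂ = 1 / t := by
            rw [hz2, hw2, hs_def]
            field_simp
            ring
          rw [hzw, ← ENNReal.ofReal_add (by positivity) (by positivity)]
          congr 1
          rw [← add_div]
          norm_num

/-- Quadratic case, arbitrary coefficients. -/
lemma quad_vol (a b c t : ℝ) (ht : 0 < t) :
    volume {x : ℝ | 2 * t * |a * x ^ 2 + b * x + c| < |2 * a * x + b|} ≤ ENNReal.ofReal (2 / t) := by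
  rcases lt_trichotomy a 0 with ha | ha | ha
  · have hset : {x : ℝ | 2 * t * |a * x ^ 2 + b * x + c| < |2 * a * x + b|}
        = {x : ℝ | 2 * t * |(-a) * x ^ 2 + (-b) * x + (-c)| < |2 * (-a) * x + (-b)|} := by
      ext x
      simp only [mem_setOf_eq]
      rw [show (-a) * x ^ 2 + (-b) * x + (-c) = -(a * x ^ 2 + b * x + c) by ring,
        show 2 * (-a) * x + (-b) = -(2 * a * x + b) by ring, abs_neg, abs_neg]
    rw [hset]
    exact quad_vol_pos (-a) (-b) (-c) t (by linarith) ht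
  · subst ha
    have hsub : {x : ℝ | 2 * t * |(0:ℝ) * x ^ 2 + b * x + c| < |2 * 0 * x + b|}
        ⊆ {x : ℝ | t * |b * x + c| < |b|} := by
      intro x hx
      simp only [mem_setOf_eq] at hx ⊢
      have h1 : (0:ℝ) * x ^ 2 + b * x + c = b * x + c := by ring
      have h2 : |2 * (0:ℝ) * x + b| = |b| := by norm_num
      rw [h1, h2] at hx
      nlinarith [abs_nonneg (b * x + c)]
    exact le_trans (measure_mono hsub) (lin_vol b c t ht)
  · exact quad_vol_pos a b c t ha ht



variable {n : ℕ}

/-- The matrix `B` with the entries `(i,j)` and `(j,i)` replaced by `x`. -/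
def upd (B : Matrix (Fin n) (Fin n) ℝ) (i j : Fin n) (x : ℝ) : Matrix (Fin n) (Fin n) ℝ :=
  fun k l => if k = i ∧ l = j ∨ k = j ∧ l = i then x else B k l

lemma updateRow_comm' (M : Matrix (Fin n) (Fin n) ℝ) {i j : Fin n} (hij : i ≠ j)
    (u v : Fin n → ℝ) :
    (M.updateRow i u).updateRow j v = (M.updateRow j v).updateRow i u := by
  ext k l
  rcases eq_or_ne k i with rfl | hki
  · rw [updateRow_ne (show k ≠ j from hij), updateRow_self, updateRow_self]
  · rcases eq_or_ne k j with rfl | hkj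
    · rw [updateRow_self, updateRow_ne (show k ≠ i from Ne.symm hij), updateRow_self]
    · rw [updateRow_ne hkj, updateRow_ne hki, updateRow_ne hki, updateRow_ne hkj]

lemma updateRow_collapse (M : Matrix (Fin n) (Fin n) ℝ) (i : Fin n) (u v : Fin n → ℝ) :
    (M.updateRow i u).updateRow i v = M.updateRow i v := by
  ext k l
  rcases eq_or_ne k i with rfl | h
  · rw [updateRow_self, updateRow_self]
  · rw [updateRow_ne h, updateRow_ne h, updateRow_ne h]

lemma updateRow_absorb (M : Matrix (Fin n) (Fin n) ℝ) {i j : Fin n} (hij : i ≠ j)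
    (v : Fin n → ℝ) :
    (M.updateRow j v).updateRow i (M i) = M.updateRow j v := by
  conv_lhs => rw [show M i = (M.updateRow j v) i from (updateRow_ne hij).symm]
  rw [updateRow_eq_self]

lemma upd_rows (B : Matrix (Fin n) (Fin n) ℝ) (i j : Fin n) (hij : i ≠ j) (x : ℝ) :
    upd B i j x = ((upd B i j 0).updateRow i
        ((upd B i j 0) i + x • (Pi.single j 1 : Fin n → ℝ))).updateRow j
      ((upd B i j 0) j + x • (Pi.single i 1 : Fin n → ℝ)) := by
  ext k l
  rcases eq_or_ne k j with hkj | hkj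
  · rw [hkj, updateRow_self]
    simp only [Pi.add_apply, Pi.smul_apply, smul_eq_mul]
    rcases eq_or_ne l i with hli | hli
    · rw [hli, Pi.single_eq_same]
      show (if j = i ∧ i = j ∨ j = j ∧ i = i then x else B j i)
          = (if j = i ∧ i = j ∨ j = j ∧ i = i then (0:ℝ) else B j i) + x * 1
      simp
    · rw [Pi.single_eq_of_ne hli]
      show (if j = i ∧ l = j ∨ j = j ∧ l = i then x else B j l)
          = (if j = i ∧ l = j ∨ j = j ∧ l = i then (0:ℝ) else B j l) + x * 0
      have hc : ¬(j = i ∧ l = j ∨ j = j ∧ l = i) := by tauto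
      rw [if_neg hc, if_neg hc]
      ring
  · rw [updateRow_ne hkj]
    rcases eq_or_ne k i with hki | hki
    · rw [hki, updateRow_self]
      simp only [Pi.add_apply, Pi.smul_apply, smul_eq_mul]
      rcases eq_or_ne l j with hlj | hlj
      · rw [hlj, Pi.single_eq_same]
        show (if i = i ∧ j = j ∨ i = j ∧ j = i then x else B i j)
            = (if i = i ∧ j = j ∨ i = j ∧ j = i then (0:ℝ) else B i j) + x * 1
        simp
      · rw [Pi.single_eq_of_ne hlj]
        show (if i = i ∧ l = j ∨ i = j ∧ l = i then x else B i l)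
            = (if i = i ∧ l = j ∨ i = j ∧ l = i then (0:ℝ) else B i l) + x * 0
        have hc : ¬(i = i ∧ l = j ∨ i = j ∧ l = i) := by tauto
        rw [if_neg hc, if_neg hc]
        ring
    · rw [updateRow_ne hki]
      show (if k = i ∧ l = j ∨ k = j ∧ l = i then x else B k l)
          = (if k = i ∧ l = j ∨ k = j ∧ l = i then (0:ℝ) else B k l)
      have hc : ¬(k = i ∧ l = j ∨ k = j ∧ l = i) := by tauto
      rw [if_neg hc, if_neg hc]

lemma upd_rows_diag (B : Matrix (Fin n) (Fin n) ℝ) (i : Fin n) (x : ℝ) :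
    upd B i i x = (upd B i i 0).updateRow i
      ((upd B i i 0) i + x • (Pi.single i 1 : Fin n → ℝ)) := by
  ext k l
  rcases eq_or_ne k i with hki | hki
  · rw [hki, updateRow_self]
    simp only [Pi.add_apply, Pi.smul_apply, smul_eq_mul]
    rcases eq_or_ne l i with hli | hli
    · rw [hli, Pi.single_eq_same]
      show (if i = i ∧ i = i ∨ i = i ∧ i = i then x else B i i)
          = (if i = i ∧ i = i ∨ i = i ∧ i = i then (0:ℝ) else B i i) + x * 1
      simp
    · rw [Pi.single_eq_of_ne hli]
      show (if i = i ∧ l = i ∨ i = i ∧ l = i then x else B i l)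
          = (if i = i ∧ l = i ∨ i = i ∧ l = i then (0:ℝ) else B i l) + x * 0
      have hc : ¬(i = i ∧ l = i ∨ i = i ∧ l = i) := by tauto
      rw [if_neg hc, if_neg hc]
      ring
  · rw [updateRow_ne hki]
    show (if k = i ∧ l = i ∨ k = i ∧ l = i then x else B k l)
        = (if k = i ∧ l = i ∨ k = i ∧ l = i then (0:ℝ) else B k l)
    have hc : ¬(k = i ∧ l = i ∨ k = i ∧ l = i) := by tauto
    rw [if_neg hc, if_neg hc]

lemma upd_isSymm {B : Matrix (Fin n) (Fin n) ℝ} (hB : B.IsSymm) (i j : Fin n) (x : ℝ) :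
    (upd B i j x).IsSymm := by
  apply Matrix.IsSymm.ext
  intro k l
  show (if l = i ∧ k = j ∨ l = j ∧ k = i then x else B l k)
      = (if k = i ∧ l = j ∨ k = j ∧ l = i then x else B k l)
  by_cases h : k = i ∧ l = j ∨ k = j ∧ l = i
  · have h' : l = i ∧ k = j ∨ l = j ∧ k = i := by tauto
    rw [if_pos h', if_pos h]
  · have h' : ¬(l = i ∧ k = j ∨ l = j ∧ k = i) := by tauto
    rw [if_neg h', if_neg h]
    exact hB.apply k l

/-- Structure of determinant and adjugate entry of `upd B i j x`, off-diagonal case. -/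
lemma det_adj_upd (B : Matrix (Fin n) (Fin n) ℝ) (hB : B.IsSymm) (i j : Fin n) (hij : i ≠ j) :
    ∃ a β c : ℝ, (∀ x : ℝ, (upd B i j x).det = a * x ^ 2 + 2 * β * x + c) ∧
      (∀ x : ℝ, (upd B i j x).adjugate i j = a * x + β) := by
  classical
  set B₀ := upd B i j 0 with hB₀
  have hB₀symm : B₀.IsSymm := upd_isSymm hB i j 0
  have e6 : B₀.adjugate j i = B₀.adjugate i j := by
    have h1 := congrFun (congrFun (B₀.adjugate_transpose) i) j
    simp only [transpose_apply] at h1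
    rw [hB₀symm.eq] at h1
    exact h1
  set ej : Fin n → ℝ := Pi.single j 1 with hej
  set ei : Fin n → ℝ := Pi.single i 1 with hei
  refine ⟨((B₀.updateRow i ej).updateRow j ei).det, B₀.adjugate i j, B₀.det, ?_, ?_⟩
  · intro x
    rw [upd_rows B i j hij x, ← hB₀, ← hej, ← hei]
    rw [det_updateRow_add, det_updateRow_smul]
    have t1 : (B₀.updateRow i (B₀ i + x • ej)).updateRow j (B₀ j)
        = B₀.updateRow i (B₀ i + x • ej) := by
      conv_lhs => rw [show B₀ j = (B₀.updateRow i (B₀ i + x • ej)) j from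
        (updateRow_ne (Ne.symm hij)).symm]
      rw [updateRow_eq_self]
    rw [t1, det_updateRow_add, det_updateRow_smul, updateRow_eq_self]
    rw [updateRow_comm' _ hij, det_updateRow_add, det_updateRow_smul,
      updateRow_absorb _ hij, updateRow_comm' _ (Ne.symm hij)]
    have a1 : (B₀.updateRow i ej).det = B₀.adjugate j i := (adjugate_apply _ _ _).symm
    have a2 : (B₀.updateRow j ei).det = B₀.adjugate i j := (adjugate_apply _ _ _).symm
    rw [a1, a2, e6]
    ring
  · intro x
    rw [upd_rows B i j hij x, ← hB₀, ← hej, ← hei, adjugate_apply, ← hei,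
      updateRow_collapse, updateRow_comm' _ hij, det_updateRow_add, det_updateRow_smul,
      updateRow_absorb _ hij, updateRow_comm' _ (Ne.symm hij)]
    have a2 : (B₀.updateRow j ei).det = B₀.adjugate i j := (adjugate_apply _ _ _).symm
    rw [a2]
    ring


/-- Diagonal case. -/
lemma det_adj_upd_diag (B : Matrix (Fin n) (Fin n) ℝ) (i : Fin n) :
    ∃ b c : ℝ, (∀ x : ℝ, (upd B i i x).det = b * x + c) ∧
      (∀ x : ℝ, (upd B i i x).adjugate i i = b) := by
  classical
  set B₀ := upd B i i 0 with hB₀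
  set ei : Fin n → ℝ := Pi.single i 1 with hei
  refine ⟨B₀.adjugate i i, B₀.det, ?_, ?_⟩
  · intro x
    rw [upd_rows_diag B i x, ← hB₀, ← hei, det_updateRow_add, det_updateRow_smul,
      updateRow_eq_self]
    have a1 : (B₀.updateRow i ei).det = B₀.adjugate i i := (adjugate_apply _ _ _).symm
    rw [a1]
    ring
  · intro x
    rw [upd_rows_diag B i x, ← hB₀, ← hei, adjugate_apply, ← hei, updateRow_collapse,
      adjugate_apply, ← hei]

/-- Key deterministic lemma: as one symmetric pair of entries varies, the set where the
`(i,j)` entry of the inverse is larger than `t` in absolute value has measure `≤ 2/t`. -/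
lemma slice_vol (B : Matrix (Fin n) (Fin n) ℝ) (hB : B.IsSymm) (i j : Fin n) (t : ℝ)
    (ht : 0 < t) :
    volume {x : ℝ | t < |(upd B i j x)⁻¹ i j|} ≤ ENNReal.ofReal (2 / t) := by
  classical
  have hinv : ∀ x : ℝ, (upd B i j x)⁻¹ i j
      = Ring.inverse (upd B i j x).det * (upd B i j x).adjugate i j := by
    intro x
    rw [Matrix.inv_def, Matrix.smul_apply, smul_eq_mul]
  rcases eq_or_ne i j with rfl | hij
  · obtain ⟨b, c, hdet, hadj⟩ := det_adj_upd_diag B i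
    have hsub : {x : ℝ | t < |(upd B i i x)⁻¹ i i|} ⊆ {x : ℝ | t * |b * x + c| < |b|} := by
      intro x hx
      simp only [mem_setOf_eq] at hx ⊢
      rcases eq_or_ne (upd B i i x).det 0 with hd | hd
      · rw [hinv x, hd, Ring.inverse_zero, zero_mul, abs_zero] at hx
        linarith
      · rw [hinv x, Ring.inverse_eq_inv, abs_mul, abs_inv, hdet, hadj] at hx
        have hdpos : 0 < |b * x + c| := by
          rw [← hdet x]
          exact abs_pos.mpr hd
        rw [inv_mul_eq_div, lt_div_iff₀ hdpos] at hx
        linarith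
    exact le_trans (measure_mono hsub) (lin_vol b c t ht)
  · obtain ⟨a, β, c, hdet, hadj⟩ := det_adj_upd B hB i j hij
    have hsub : {x : ℝ | t < |(upd B i j x)⁻¹ i j|}
        ⊆ {x : ℝ | 2 * t * |a * x ^ 2 + (2 * β) * x + c| < |2 * a * x + 2 * β|} := by
      intro x hx
      simp only [mem_setOf_eq] at hx ⊢
      rcases eq_or_ne (upd B i j x).det 0 with hd | hd
      · rw [hinv x, hd, Ring.inverse_zero, zero_mul, abs_zero] at hx
        linarith
      · rw [hinv x, Ring.inverse_eq_inv, abs_mul, abs_inv, hdet, hadj] at hx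
        have hdpos : 0 < |a * x ^ 2 + 2 * β * x + c| := by
          rw [← hdet x]
          exact abs_pos.mpr hd
        have h2 : t * |a * x ^ 2 + 2 * β * x + c| < |a * x + β| := by
          rw [inv_mul_eq_div, lt_div_iff₀ hdpos] at hx
          linarith
        have h3 : (2 * β) * x = 2 * β * x := by ring
        rw [h3]
        calc 2 * t * |a * x ^ 2 + 2 * β * x + c|
            = 2 * (t * |a * x ^ 2 + 2 * β * x + c|) := by ring
          _ < 2 * |a * x + β| := by linarith
          _ = |2 * a * x + 2 * β| := by
              rw [show 2 * a * x + 2 * β = 2 * (a * x + β) by ring, abs_mul]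
              norm_num
    exact le_trans (measure_mono hsub) (quad_vol a (2 * β) c t ht)





abbrev Idx (n : ℕ) := {p : Fin n × Fin n // p.1 ≤ p.2}

/-- Index of the symmetrized coordinate. -/
def symIdx (k l : Fin n) : Idx n :=
  if h : k ≤ l then ⟨(k, l), h⟩ else ⟨(l, k), le_of_not_ge h⟩

/-- Build a symmetric matrix from its upper-triangular entries. -/
def build (f : Idx n → ℝ) : Matrix (Fin n) (Fin n) ℝ := fun k l => f (symIdx k l)

lemma build_isSymm (f : Idx n → ℝ) : (build f).IsSymm := by
  apply Matrix.IsSymm.ext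
  intro k l
  show f (symIdx l k) = f (symIdx k l)
  congr 1
  unfold symIdx
  rcases le_or_gt k l with h | h
  · rcases eq_or_lt_of_le h with rfl | h'
    · simp
    · rw [dif_pos h, dif_neg (not_le.mpr h')]
  · rw [dif_pos h.le, dif_neg (not_le.mpr h)]

lemma symIdx_eq_iff {i j : Fin n} (hij : i ≤ j) (k l : Fin n) :
    symIdx k l = (⟨(i, j), hij⟩ : Idx n) ↔ (k = i ∧ l = j ∨ k = j ∧ l = i) := by
  unfold symIdx
  split_ifs with h
  · constructor
    · intro he
      have : (k, l) = (i, j) := congrArg Subtype.val he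
      rw [Prod.mk.injEq] at this
      exact Or.inl this
    · rintro (⟨rfl, rfl⟩ | ⟨rfl, rfl⟩)
      · rfl
      · have hkl : k = l := le_antisymm h hij
        subst hkl
        rfl
  · constructor
    · intro he
      have : (l, k) = (i, j) := congrArg Subtype.val he
      rw [Prod.mk.injEq] at this
      exact Or.inr ⟨this.2, this.1⟩
    · rintro (⟨rfl, rfl⟩ | ⟨rfl, rfl⟩)
      · exact absurd hij h
      · rfl

lemma build_update {i j : Fin n} (hij : i ≤ j) (f : Idx n → ℝ) (x : ℝ) :
    build (Function.update f ⟨(i, j), hij⟩ x)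
      = upd (build (Function.update f ⟨(i, j), hij⟩ 0)) i j x := by
  ext k l
  show Function.update f ⟨(i, j), hij⟩ x (symIdx k l)
      = if k = i ∧ l = j ∨ k = j ∧ l = i then x
        else Function.update f ⟨(i, j), hij⟩ 0 (symIdx k l)
  by_cases h : k = i ∧ l = j ∨ k = j ∧ l = i
  · rw [if_pos h, (symIdx_eq_iff hij k l).mpr h, Function.update_self]
  · have hne : symIdx k l ≠ ⟨(i, j), hij⟩ := fun he => h ((symIdx_eq_iff hij k l).mp he)
    rw [if_neg h, Function.update_of_ne hne, Function.update_of_ne hne]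





lemma iIndepFun_congr_ae {Ω : Type*} [MeasureSpace Ω] {ι : Type*}
    {f g : ι → Ω → ℝ} (h : iIndepFun f ℙ)
    (hfg : ∀ i, f i =ᵐ[ℙ] g i) :
    iIndepFun g ℙ := by
  rw [iIndepFun_iff_measure_inter_preimage_eq_mul] at h ⊢
  intro S sets hsets
  have key : ∀ i : ι, (g i ⁻¹' sets i : Set Ω) =ᵐ[ℙ] (f i ⁻¹' sets i : Set Ω) := by
    intro i
    filter_upwards [hfg i] with ω hω
    show (ω ∈ g i ⁻¹' sets i) = (ω ∈ f i ⁻¹' sets i)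
    simp only [Set.mem_preimage, hω]
  have h1 : ℙ (⋂ i ∈ S, g i ⁻¹' sets i) = ℙ (⋂ i ∈ S, f i ⁻¹' sets i) := by
    apply measure_congr
    have hall : ∀ᵐ ω ∂(ℙ : Measure Ω), ∀ i ∈ S, (ω ∈ g i ⁻¹' sets i) = (ω ∈ f i ⁻¹' sets i) :=
      (Filter.eventually_all_finset S).mpr fun i _ => key i
    filter_upwards [hall] with ω hω
    show (ω ∈ ⋂ i ∈ S, g i ⁻¹' sets i) = (ω ∈ ⋂ i ∈ S, f i ⁻¹' sets i)
    simp only [Set.mem_iInter]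
    refine propext ⟨fun hmem i hi => ?_, fun hmem i hi => ?_⟩
    · rw [← hω i hi]; exact hmem i hi
    · rw [hω i hi]; exact hmem i hi
  rw [h1, h S hsets]
  exact Finset.prod_congr rfl fun i _ => measure_congr (key i).symm

theorem main_le {Ω : Type*} [MeasureSpace Ω]
    [IsProbabilityMeasure (ℙ : Measure Ω)]
    {n : ℕ} (A : Ω → Matrix (Fin n) (Fin n) ℝ) (K : ℝ)
    (hsymm : ∀ ω, (A ω).IsSymm)
    (hindep : iIndepFun
      (fun (p : Idx n) ω => A ω p.1.1 p.1.2) ℙ)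
    (hpdf : ∀ i j : Fin n, i ≤ j → HasPDF (fun ω => A ω i j) ℙ)
    (hK : ∀ i j : Fin n, i ≤ j → ∀ x, pdf (fun ω => A ω i j) ℙ volume x ≤ ENNReal.ofReal K)
    (i j : Fin n) (hij : i ≤ j) (t : ℝ) (ht : 0 < t) :
    ℙ {ω | |(A ω)⁻¹ i j| > t} ≤ ENNReal.ofReal (2 * K / t) := by
  classical
  set X : Idx n → Ω → ℝ := fun p ω => A ω p.1.1 p.1.2 with hXdef
  have hXae : ∀ p : Idx n, AEMeasurable (X p) ℙ := by
    intro p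
    haveI := hpdf p.1.1 p.1.2 p.2
    exact HasPDF.aemeasurable (fun ω => A ω p.1.1 p.1.2) ℙ volume
  set X' : Idx n → Ω → ℝ := fun p => (hXae p).mk (X p) with hX'def
  have hX'm : ∀ p, Measurable (X' p) := fun p => (hXae p).measurable_mk
  have hX'ae : ∀ p, X p =ᵐ[ℙ] X' p := fun p => (hXae p).ae_eq_mk
  have hindep' : iIndepFun X' ℙ := iIndepFun_congr_ae hindep hX'ae
  set p₀ : Idx n := ⟨(i, j), hij⟩ with hp₀
  set Sfin : Finset (Idx n) := Finset.univ.erase p₀ with hSfin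
  set Tfin : Finset (Idx n) := {p₀} with hTfin
  have hdisj : Disjoint Sfin Tfin := by
    rw [Finset.disjoint_singleton_right]
    exact Finset.notMem_erase _ _
  have hIF : IndepFun (fun ω (q : Sfin) => X' q ω) (fun ω (q : Tfin) => X' q ω) ℙ :=
    hindep'.indepFun_finset Sfin Tfin hdisj hX'm
  set Y : Ω → (Sfin → ℝ) := fun ω q => X' q ω with hYdef
  set Z : Ω → (Tfin → ℝ) := fun ω q => X' q ω with hZdef
  have hYm : Measurable Y := measurable_pi_lambda _ fun q => hX'm q
  have hZm : Measurable Z := measurable_pi_lambda _ fun q => hX'm q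
  have hmap : (ℙ : Measure Ω).map (fun ω => (Y ω, Z ω)) = ((ℙ : Measure Ω).map Y).prod ((ℙ : Measure Ω).map Z) :=
    (indepFun_iff_map_prod_eq_prod_map_map hYm.aemeasurable hZm.aemeasurable).mp hIF
  have hp₀T : p₀ ∈ Tfin := Finset.mem_singleton_self p₀
  set combine : (Sfin → ℝ) × (Tfin → ℝ) → (Idx n → ℝ) := fun w p =>
    if h : p = p₀ then w.2 ⟨p₀, hp₀T⟩
    else w.1 ⟨p, Finset.mem_erase.mpr ⟨h, Finset.mem_univ p⟩⟩ with hcombine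
  have hbuildc : Continuous (fun w : (Sfin → ℝ) × (Tfin → ℝ) => build (combine w)) := by
    apply continuous_pi
    intro k
    apply continuous_pi
    intro l
    show Continuous fun w : (Sfin → ℝ) × (Tfin → ℝ) => combine w (symIdx k l)
    by_cases h : symIdx k l = p₀
    · simp only [hcombine, dif_pos h]
      exact (continuous_apply _).comp continuous_snd
    · simp only [hcombine, dif_neg h]
      exact (continuous_apply _).comp continuous_fst
  have hGm : Measurable (fun w : (Sfin → ℝ) × (Tfin → ℝ) => (build (combine w))⁻¹ i j) := by
    have h1 : (fun w : (Sfin → ℝ) × (Tfin → ℝ) => (build (combine w))⁻¹ i j)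
        = fun w => Ring.inverse (build (combine w)).det
        * (build (combine w)).adjugate i j := by
      funext w
      rw [Matrix.inv_def, Matrix.smul_apply, smul_eq_mul]
    rw [h1]
    simp only [Ring.inverse_eq_inv]
    exact ((hbuildc.matrix_det.measurable).inv).mul
      ((hbuildc.matrix_adjugate.matrix_elem i j).measurable)
  set SetG : Set ((Sfin → ℝ) × (Tfin → ℝ)) := {w | t < |(build (combine w))⁻¹ i j|} with hSetG
  have hSetGm : MeasurableSet SetG := measurableSet_lt measurable_const hGm.abs
  have hNae : ∀ᵐ ω ∂(ℙ : Measure Ω), ∀ p : Idx n, X p ω = X' p ω := ae_all_iff.mpr hX'ae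
  have hsub : {ω | |(A ω)⁻¹ i j| > t} ⊆
      ((fun ω => (Y ω, Z ω)) ⁻¹' SetG) ∪ {ω | ¬ ∀ p : Idx n, X p ω = X' p ω} := by
    intro ω hω
    by_cases hN : ∀ p : Idx n, X p ω = X' p ω
    · left
      have hc : ∀ p : Idx n, combine (Y ω, Z ω) p = X' p ω := by
        intro p
        by_cases h : p = p₀
        · subst h
          show combine (Y ω, Z ω) p₀ = X' p₀ ω
          exact dif_pos rfl
        · show combine (Y ω, Z ω) p = X' p ω
          exact dif_neg h
      have hbuild : build (combine (Y ω, Z ω)) = A ω := by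
        ext k l
        show combine (Y ω, Z ω) (symIdx k l) = A ω k l
        rw [hc (symIdx k l), ← hN (symIdx k l)]
        show A ω (symIdx k l).1.1 (symIdx k l).1.2 = A ω k l
        unfold symIdx
        split_ifs with h
        · rfl
        · exact (hsymm ω).apply k l
      show t < |(build (combine (Y ω, Z ω)))⁻¹ i j|
      rw [hbuild]
      exact hω
    · right
      exact hN
  have hbad : ℙ {ω | ¬ ∀ p : Idx n, X p ω = X' p ω} = 0 := by
    exact hNae
  haveI : IsProbabilityMeasure ((ℙ : Measure Ω).map Y) := Measure.isProbabilityMeasure_map hYm.aemeasurable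
  -- slice bound
  have hslice : ∀ y : Sfin → ℝ,
      ((ℙ : Measure Ω).map Z) (Prod.mk y ⁻¹' SetG) ≤ ENNReal.ofReal K * ENNReal.ofReal (2 / t) := by
    intro y
    set f0 : Idx n → ℝ := combine (y, fun _ => 0) with hf0
    set Cy : Matrix (Fin n) (Fin n) ℝ := build f0 with hCy
    have hCysymm : Cy.IsSymm := build_isSymm f0
    set sy : Set ℝ := {x : ℝ | t < |(upd Cy i j x)⁻¹ i j|} with hsy
    have hsym : MeasurableSet sy := by
      have hupdc : Continuous fun x : ℝ => upd Cy i j x := by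
        apply continuous_pi
        intro k
        apply continuous_pi
        intro l
        show Continuous fun x : ℝ => if k = i ∧ l = j ∨ k = j ∧ l = i then x else Cy k l
        split_ifs with h
        · exact continuous_id
        · exact continuous_const
      have hinvc : Measurable fun x : ℝ => (upd Cy i j x)⁻¹ i j := by
        have h1 : (fun x : ℝ => (upd Cy i j x)⁻¹ i j)
            = fun x => Ring.inverse (upd Cy i j x).det * (upd Cy i j x).adjugate i j := by
          funext x
          rw [Matrix.inv_def, Matrix.smul_apply, smul_eq_mul]
        rw [h1]
        simp only [Ring.inverse_eq_inv]
        exact ((hupdc.matrix_det.measurable).inv).mul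
          ((hupdc.matrix_adjugate.matrix_elem i j).measurable)
      exact measurableSet_lt measurable_const hinvc.abs
    -- identify the slice
    have hfeq : ∀ z : Tfin → ℝ, build (combine (y, z)) = upd Cy i j (z ⟨p₀, hp₀T⟩) := by
      intro z
      have h1 : combine (y, z) = Function.update f0 p₀ (z ⟨p₀, hp₀T⟩) := by
        funext p
        by_cases h : p = p₀
        · subst h
          rw [Function.update_self]
          simp only [hcombine, dif_pos rfl]
        · rw [Function.update_of_ne h]
          simp only [hf0, hcombine, dif_neg h]
      have h2 : f0 = Function.update f0 p₀ 0 := by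
        funext p
        by_cases h : p = p₀
        · subst h
          rw [Function.update_self]
          simp only [hf0, hcombine, dif_pos rfl]
        · rw [Function.update_of_ne h]
      rw [h1, hCy]
      conv_rhs => rw [h2]
      exact build_update hij f0 (z ⟨p₀, hp₀T⟩)
    have hslice_eq : Prod.mk y ⁻¹' SetG = (fun z : Tfin → ℝ => z ⟨p₀, hp₀T⟩) ⁻¹' sy := by
      ext z
      simp only [Set.mem_preimage, hSetG, Set.mem_setOf_eq, hsy]
      rw [hfeq z]
    rw [hslice_eq]
    have hevalm : Measurable fun z : Tfin → ℝ => z ⟨p₀, hp₀T⟩ := measurable_pi_apply _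
    rw [← Measure.map_apply hevalm hsym, Measure.map_map hevalm hZm]
    have hcomp : (fun z : Tfin → ℝ => z ⟨p₀, hp₀T⟩) ∘ Z = X' p₀ := rfl
    rw [hcomp]
    have hmapX : (ℙ : Measure Ω).map (X' p₀) = (ℙ : Measure Ω).map (X p₀) := (Measure.map_congr (hX'ae p₀)).symm
    rw [hmapX]
    haveI := hpdf i j hij
    have hXp₀ : X p₀ = fun ω => A ω i j := rfl
    rw [hXp₀, map_eq_withDensity_pdf (fun ω => A ω i j) ℙ volume, withDensity_apply _ hsym]
    calc ∫⁻ x in sy, pdf (fun ω => A ω i j) ℙ volume x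
        ≤ ∫⁻ _x in sy, ENNReal.ofReal K := by
          apply setLIntegral_mono measurable_const
          intro x _
          exact hK i j hij x
      _ = ENNReal.ofReal K * volume sy := by rw [setLIntegral_const]
      _ ≤ ENNReal.ofReal K * ENNReal.ofReal (2 / t) :=
          mul_le_mul_right (slice_vol Cy hCysymm i j t ht) _
  calc ℙ {ω | |(A ω)⁻¹ i j| > t}
      ≤ ℙ (((fun ω => (Y ω, Z ω)) ⁻¹' SetG) ∪ {ω | ¬ ∀ p : Idx n, X p ω = X' p ω}) :=
        measure_mono hsub
    _ ≤ ℙ ((fun ω => (Y ω, Z ω)) ⁻¹' SetG) + ℙ {ω | ¬ ∀ p : Idx n, X p ω = X' p ω} :=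
        measure_union_le _ _
    _ = ℙ ((fun ω => (Y ω, Z ω)) ⁻¹' SetG) := by rw [hbad, add_zero]
    _ = ((ℙ : Measure Ω).map (fun ω => (Y ω, Z ω))) SetG :=
        (Measure.map_apply (hYm.prodMk hZm) hSetGm).symm
    _ = (((ℙ : Measure Ω).map Y).prod ((ℙ : Measure Ω).map Z)) SetG := by rw [hmap]
    _ = ∫⁻ y, ((ℙ : Measure Ω).map Z) (Prod.mk y ⁻¹' SetG) ∂((ℙ : Measure Ω).map Y) := Measure.prod_apply hSetGm
    _ ≤ ∫⁻ _y, ENNReal.ofReal K * ENNReal.ofReal (2 / t) ∂((ℙ : Measure Ω).map Y) := lintegral_mono hslice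
    _ = ENNReal.ofReal K * ENNReal.ofReal (2 / t) := by
        rw [lintegral_const, measure_univ, mul_one]
    _ ≤ ENNReal.ofReal (2 * K / t) := by
        rcases le_or_gt 0 K with hK0 | hK0
        · rw [← ENNReal.ofReal_mul hK0]
          apply ENNReal.ofReal_le_ofReal
          rw [mul_comm, mul_div_assoc]
          ring_nf
          exact le_refl _
        · rw [ENNReal.ofReal_of_nonpos hK0.le, zero_mul]
          exact zero_le


end InvEntryAux

open MeasureTheory ProbabilityTheory

open Matrix Set in
/-- For a symmetric random matrix with independent entries having densities bounded by K,
each entry of the inverse satisfies P(|(A⁻¹)_{i,j}| > t) ≤ 2K/t. -/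
theorem inv_entry_weak_bound {Ω : Type*} [MeasureSpace Ω]
    [IsProbabilityMeasure (ℙ : Measure Ω)]
    {n : ℕ} (A : Ω → Matrix (Fin n) (Fin n) ℝ) (K : ℝ)
    (hsymm : ∀ ω, (A ω).IsSymm)
    (hindep : iIndepFun
      (fun (p : {p : Fin n × Fin n // p.1 ≤ p.2}) ω => A ω p.1.1 p.1.2) ℙ)
    (hpdf : ∀ i j : Fin n, i ≤ j → HasPDF (fun ω => A ω i j) ℙ)
    (hK : ∀ i j : Fin n, i ≤ j → ∀ x, pdf (fun ω => A ω i j) ℙ volume x ≤ ENNReal.ofReal K)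
    (i j : Fin n) :
    ∀ t > 0, ℙ {ω | |(A ω)⁻¹ i j| > t} ≤ ENNReal.ofReal (2 * K / t) := by
  intro t ht
  by_cases hij : i ≤ j
  · exact InvEntryAux.main_le A K hsymm hindep hpdf hK i j hij t ht
  · have hji : j ≤ i := le_of_not_ge hij
    have hswap : {ω | |(A ω)⁻¹ i j| > t} = {ω | |(A ω)⁻¹ j i| > t} := by
      ext ω
      have h1 : ((A ω)⁻¹)ᵀ = (A ω)⁻¹ := by
        rw [Matrix.transpose_nonsing_inv, (hsymm ω).eq]
      have h2 : (A ω)⁻¹ j i = (A ω)⁻¹ i j := by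
        have h3 := congrFun (congrFun h1 i) j
        simpa [Matrix.transpose_apply] using h3
      simp only [Set.mem_setOf_eq]
      rw [h2]
    rw [hswap]
    exact InvEntryAux.main_le A K hsymm hindep hpdf hK j i hji t ht
end
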